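/- Assume in addition that Φ(0;μ) ≥ 0 for every μ∈M, and let ε∈(0,1). Then for every f∈ℝ^{n_F}: (a) the quantity Ψ̂₊(f) := inf{ Ψ₊(f,α) + α·ln(2/ε) : α>0, f/α∈F } is finite and equals max_{x∈𝒳} inf{ α·Φ(f/α; A(x)) − G(x) + α·ln(2/ε) : α>0, f/α∈F }; and (b) the function f ↦ Ψ̂₊(f) is convex on ℝ^{n_F}. -/

import Mathlib

open Matrix MeasureTheory Real

noncomputable section

/-- `Ψ₊(f,α) = sup_{x∈𝒳} [α·Φ(f/α; A(x)) − G(x)]`, where `G(x) = ⟨g,x⟩ + c`. -/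
def PsiPlus {nF nM nX : ℕ} (Φ : (Fin nF → ℝ) → (Fin nM → ℝ) → ℝ)
    (A : (Fin nX → ℝ) →ᵃ[ℝ] (Fin nM → ℝ)) (g : Fin nX → ℝ) (c : ℝ)
    (𝒳 : Set (Fin nX → ℝ)) (f : Fin nF → ℝ) (α : ℝ) : ℝ :=
  sSup ((fun x => α * Φ (α⁻¹ • f) (A x) - (g ⬝ᵥ x + c)) '' 𝒳)

/-- `Ψ₋(f,β) = sup_{x∈𝒳} [β·Φ(−f/β; A(x)) + G(x)]`. -/
def PsiMinus {nF nM nX : ℕ} (Φ : (Fin nF → ℝ) → (Fin nM → ℝ) → ℝ)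
    (A : (Fin nX → ℝ) →ᵃ[ℝ] (Fin nM → ℝ)) (g : Fin nX → ℝ) (c : ℝ)
    (𝒳 : Set (Fin nX → ℝ)) (f : Fin nF → ℝ) (β : ℝ) : ℝ :=
  sSup ((fun x => β * Φ (-(β⁻¹ • f)) (A x) + (g ⬝ᵥ x + c)) '' 𝒳)

/-- A Borel probability measure `P` is associated with parameter `μ` if
`∫ e^{⟨f,ω⟩} P(dω) ≤ e^{Φ(f;μ)}` for all `f ∈ F`
(i.e. `ln ∫ e^{⟨f,ω⟩} P(dω) ≤ Φ(f;μ)`). -/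
def AssocWith {nF nM : ℕ} (Φ : (Fin nF → ℝ) → (Fin nM → ℝ) → ℝ)
    (F : Set (Fin nF → ℝ)) (μ : Fin nM → ℝ) (P : Measure (Fin nF → ℝ)) : Prop :=
  ∀ f ∈ F, ∫⁻ ω, ENNReal.ofReal (Real.exp (f ⬝ᵥ ω)) ∂P
    ≤ ENNReal.ofReal (Real.exp (Φ f μ))

/-- Perspective convexity: membership & inequality for the perspective of a convex function. -/
theorem persp_key {nF nM : ℕ} {F : Set (Fin nF → ℝ)} (hFconv : Convex ℝ F)
    {Φ : (Fin nF → ℝ) → (Fin nM → ℝ) → ℝ} {μ : Fin nM → ℝ}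
    (hconv : ConvexOn ℝ F (fun u => Φ u μ))
    {f₁ f₂ : Fin nF → ℝ} {a b α₁ α₂ : ℝ}
    (ha : 0 ≤ a) (hb : 0 ≤ b) (hab : a + b = 1) (hα₁ : 0 < α₁) (hα₂ : 0 < α₂)
    (h₁ : α₁⁻¹ • f₁ ∈ F) (h₂ : α₂⁻¹ • f₂ ∈ F) :
    (a*α₁+b*α₂)⁻¹ • (a • f₁ + b • f₂) ∈ F ∧
    (a*α₁+b*α₂) * Φ ((a*α₁+b*α₂)⁻¹ • (a • f₁ + b • f₂)) μ
      ≤ a*α₁ * Φ (α₁⁻¹ • f₁) μ + b*α₂ * Φ (α₂⁻¹ • f₂) μ := by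
  have hα : 0 < a*α₁+b*α₂ := by
    rcases ha.lt_or_eq with h | h
    · exact add_pos_of_pos_of_nonneg (mul_pos h hα₁) (mul_nonneg hb hα₂.le)
    · have hb1 : b = 1 := by linarith
      rw [← h, hb1]; simpa using hα₂
  set α := a*α₁+b*α₂ with hαdef
  have hαne : α ≠ 0 := hα.ne'
  have hl1 : (0:ℝ) ≤ a*α₁/α := by positivity
  have hl2 : (0:ℝ) ≤ b*α₂/α := by positivity
  have hsum : a*α₁/α + b*α₂/α = 1 := by field_simp <;> ring
  have hkey : α⁻¹ • (a • f₁ + b • f₂)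
      = (a*α₁/α) • (α₁⁻¹ • f₁) + (b*α₂/α) • (α₂⁻¹ • f₂) := by
    ext i
    simp only [Pi.add_apply, Pi.smul_apply, smul_eq_mul]
    field_simp <;> ring
  constructor
  · rw [hkey]; exact hFconv h₁ h₂ hl1 hl2 hsum
  · have := hconv.2 h₁ h₂ hl1 hl2 hsum
    rw [← hkey] at this
    have h2 := mul_le_mul_of_nonneg_left this hα.le
    calc α * Φ (α⁻¹ • (a • f₁ + b • f₂)) μ
        ≤ α * ((a*α₁/α) • Φ (α₁⁻¹ • f₁) μ + (b*α₂/α) • Φ (α₂⁻¹ • f₂) μ) := h2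
      _ = a*α₁ * Φ (α₁⁻¹ • f₁) μ + b*α₂ * Φ (α₂⁻¹ • f₂) μ := by
          simp only [smul_eq_mul]; field_simp <;> ring

/-- Lower bound for the perspective function, given `Φ 0 μ ≥ 0`. -/
theorem persp_lb {nF nM : ℕ} {F : Set (Fin nF → ℝ)}
    (hFsymm : ∀ u ∈ F, -u ∈ F) (h0F : (0 : Fin nF → ℝ) ∈ F)
    {Φ : (Fin nF → ℝ) → (Fin nM → ℝ) → ℝ} {μ : Fin nM → ℝ}
    (hconv : ConvexOn ℝ F (fun u => Φ u μ)) (hΦ0 : 0 ≤ Φ 0 μ)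
    {f : Fin nF → ℝ} {α₀ α : ℝ} (hα₀ : 0 < α₀) (h₀ : α₀⁻¹ • f ∈ F)
    (hα : 0 < α) (h : α⁻¹ • f ∈ F) :
    min (-(α₀ * Φ (-(α₀⁻¹ • f)) μ)) (α₀ * Φ (α₀⁻¹ • f) μ - α₀ * Φ 0 μ)
      ≤ α * Φ (α⁻¹ • f) μ := by
  rcases le_or_gt α₀ α with hle | hlt
  · -- α₀ ≤ α
    have hmem : -(α⁻¹ • f) ∈ F := hFsymm _ h
    have e0 : (0 : Fin nF → ℝ) = (1/2 : ℝ) • (α⁻¹ • f) + (1/2 : ℝ) • (-(α⁻¹ • f)) := by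
      module
    have h1 : Φ 0 μ ≤ (1/2) * Φ (α⁻¹ • f) μ + (1/2) * Φ (-(α⁻¹ • f)) μ := by
      have := hconv.2 h hmem (by norm_num : (0:ℝ) ≤ 1/2) (by norm_num : (0:ℝ) ≤ 1/2) (by norm_num : (1:ℝ)/2 + 1/2 = 1)
      rw [← e0] at this; simpa using this
    set t := α₀/α with ht
    have ht0 : 0 ≤ t := by positivity
    have ht1 : t ≤ 1 := by rw [ht]; exact div_le_one_of_le₀ hle hα.le
    have e1 : t • (-(α₀⁻¹ • f)) + (1 - t) • (0 : Fin nF → ℝ) = -(α⁻¹ • f) := by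
      ext i
      simp only [Pi.add_apply, Pi.smul_apply, Pi.neg_apply, Pi.zero_apply, smul_eq_mul, ht]
      field_simp <;> ring
    have h2 : Φ (-(α⁻¹ • f)) μ ≤ t * Φ (-(α₀⁻¹ • f)) μ + (1 - t) * Φ 0 μ := by
      have := hconv.2 (hFsymm _ h₀) h0F ht0 (by linarith : (0:ℝ) ≤ 1 - t) (by ring : t + (1 - t) = 1)
      rw [e1] at this; simpa using this
    have key : (1 + t) * Φ 0 μ - t * Φ (-(α₀⁻¹ • f)) μ ≤ Φ (α⁻¹ • f) μ := by linarith
    have h3 := mul_le_mul_of_nonneg_left key hα.le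
    have hαt : α * t = α₀ := by rw [ht]; field_simp <;> ring
    have h4 : α * ((1 + t) * Φ 0 μ - t * Φ (-(α₀⁻¹ • f)) μ)
        = (α + α₀) * Φ 0 μ - α₀ * Φ (-(α₀⁻¹ • f)) μ := by
      rw [← hαt]; ring
    have h5 : -(α₀ * Φ (-(α₀⁻¹ • f)) μ) ≤ α * Φ (α⁻¹ • f) μ := by
      nlinarith [mul_nonneg (by linarith : (0:ℝ) ≤ α + α₀) hΦ0]
    exact le_trans (min_le_left _ _) h5
  · -- α < α₀
    set s := α/α₀ with hs
    have hs0 : 0 ≤ s := by positivity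
    have hs1 : s ≤ 1 := by rw [hs]; exact ((div_lt_one hα₀).mpr hlt).le
    have e1 : s • (α⁻¹ • f) + (1 - s) • (0 : Fin nF → ℝ) = α₀⁻¹ • f := by
      ext i
      simp only [Pi.add_apply, Pi.smul_apply, Pi.zero_apply, smul_eq_mul, hs]
      field_simp <;> ring
    have h2 : Φ (α₀⁻¹ • f) μ ≤ s * Φ (α⁻¹ • f) μ + (1 - s) * Φ 0 μ := by
      have := hconv.2 h h0F hs0 (by linarith : (0:ℝ) ≤ 1 - s) (by ring : s + (1 - s) = 1)
      rw [e1] at this; simpa using this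
    have hαs : α₀ * s = α := by rw [hs]; field_simp <;> ring
    have h5 : α₀ * Φ (α₀⁻¹ • f) μ - α₀ * Φ 0 μ ≤ α * Φ (α⁻¹ • f) μ := by
      have h6 := mul_le_mul_of_nonneg_left h2 hα₀.le
      have e2 : α₀ * (s * Φ (α⁻¹ • f) μ) = α * Φ (α⁻¹ • f) μ := by rw [← hαs]; ring
      have e3 : α₀ * ((1 - s) * Φ 0 μ) = (α₀ - α) * Φ 0 μ := by rw [← hαs]; ring
      have e4 : (α₀ - α) * Φ 0 μ ≤ α₀ * Φ 0 μ := by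
        have := mul_nonneg hα.le hΦ0; nlinarith
      nlinarith
    exact le_trans (min_le_right _ _) h5


section Sion

variable {E : Type*} [NormedAddCommGroup E] [NormedSpace ℝ E]

theorem sion_pair (θ : ℝ → E → ℝ) (D : Set ℝ)
    (K : Set E) (hKc : IsCompact K)
    (hconc : ∀ α ∈ D, ConcaveOn ℝ K (θ α))
    (hqc : ∀ x ∈ K, ∀ α₁ ∈ D, ∀ α₂ ∈ D, ∀ a b : ℝ, 0 ≤ a → 0 ≤ b → a + b = 1 →
      θ (a*α₁+b*α₂) x ≤ max (θ α₁ x) (θ α₂ x))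
    (hIcc : ∀ α₁ ∈ D, ∀ α₂ ∈ D, Set.Icc α₁ α₂ ⊆ D)
    {α₁ α₂ : ℝ} (h1 : α₁ ∈ D) (h2 : α₂ ∈ D) (h12 : α₁ ≤ α₂)
    (hcont : ContinuousOn (fun p : ℝ × E => θ p.1 p.2) (Set.Icc α₁ α₂ ×ˢ K))
    {γ b : ℝ} (hγb : γ < b)
    (H : ∀ α ∈ Set.Icc α₁ α₂, ∃ x ∈ K, b < θ α x) :
    ∃ x ∈ K, γ < θ α₁ x ∧ γ < θ α₂ x := by
  by_contra hcon
  push_neg at hcon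
  have hKcl : IsClosed K := hKc.isClosed
  set aL : ℝ := γ + (b - γ)/3 with haL
  set aM : ℝ := γ + 2*(b - γ)/3 with haM
  have hγaL : γ < aL := by rw [haL]; linarith
  have haLaM : aL < aM := by rw [haL, haM]; linarith
  have haMb : aM < b := by rw [haM]; linarith
  -- continuity of slices in x
  have hcx : ∀ α ∈ Set.Icc α₁ α₂, ContinuousOn (θ α) K := by
    intro α hα
    exact hcont.comp ((continuous_const.prodMk continuous_id).continuousOn)
      (fun x hx => ⟨hα, hx⟩)
  have hmem1 : α₁ ∈ Set.Icc α₁ α₂ := ⟨le_refl _, h12⟩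
  have hmem2 : α₂ ∈ Set.Icc α₁ α₂ := ⟨h12, le_refl _⟩
  set A : Set E := K ∩ (θ α₁) ⁻¹' (Set.Ici aL) with hA
  set B : Set E := K ∩ (θ α₂) ⁻¹' (Set.Ici aL) with hB
  have hAcl : IsClosed A :=
    (hcx α₁ hmem1).preimage_isClosed_of_isClosed hKcl isClosed_Ici
  have hBcl : IsClosed B :=
    (hcx α₂ hmem2).preimage_isClosed_of_isClosed hKcl isClosed_Ici
  have hAB : ∀ x, x ∈ A → x ∈ B → False := by
    rintro x ⟨hxK, hx1⟩ ⟨_, hx2⟩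
    have h1' : γ < θ α₁ x := lt_of_lt_of_le hγaL hx1
    have h2' : γ < θ α₂ x := lt_of_lt_of_le hγaL hx2
    exact absurd h2' (not_lt.mpr (hcon x hxK h1'))
  -- quasiconvexity along Icc
  have hqc' : ∀ x ∈ K, ∀ α ∈ Set.Icc α₁ α₂, θ α x ≤ max (θ α₁ x) (θ α₂ x) := by
    intro x hx α hα
    rcases eq_or_lt_of_le h12 with heq | hlt
    · have : α = α₁ := le_antisymm (heq ▸ hα.2) hα.1
      rw [this]; exact le_max_left _ _
    · set aa := (α₂ - α)/(α₂ - α₁) with haa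
      set bb := (α - α₁)/(α₂ - α₁) with hbb
      have hne : α₂ - α₁ ≠ 0 := by linarith
      have h1' : 0 ≤ aa := div_nonneg (by linarith [hα.2]) (by linarith)
      have h2' : 0 ≤ bb := div_nonneg (by linarith [hα.1]) (by linarith)
      have hsum : aa + bb = 1 := by rw [haa, hbb]; field_simp; ring
      have heqα : aa*α₁ + bb*α₂ = α := by rw [haa, hbb]; field_simp; ring
      have := hqc x hx α₁ h1 α₂ h2 aa bb h1' h2' hsum
      rwa [heqα] at this
  -- superlevel sets
  set Cset : ℝ → ℝ → Set E := fun α c => K ∩ (θ α) ⁻¹' (Set.Ici c) with hCset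
  have hCne : ∀ α ∈ Set.Icc α₁ α₂, (Cset α b).Nonempty := by
    intro α hα
    obtain ⟨x, hx, hbx⟩ := H α hα
    exact ⟨x, hx, le_of_lt hbx⟩
  have hdich : ∀ α ∈ Set.Icc α₁ α₂, ∀ c : ℝ, aL ≤ c → Cset α c ⊆ A ∨ Cset α c ⊆ B := by
    intro α hα c hc
    have hconvC : Convex ℝ (Cset α c) := by
      have h := (hconc α (hIcc _ h1 _ h2 hα)).convex_ge c
      have he : {x ∈ K | c ≤ θ α x} = Cset α c := by
        ext x; simp [hCset, Set.mem_sep_iff, Set.mem_inter_iff]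
      rwa [he] at h
    have hsub : Cset α c ⊆ A ∪ B := by
      rintro x ⟨hxK, hxc⟩
      have hm := hqc' x hxK α hα
      have hcx' : c ≤ θ α x := hxc
      rcases max_cases (θ α₁ x) (θ α₂ x) with ⟨hm1, _⟩ | ⟨hm1, _⟩
      · left; exact ⟨hxK, le_trans hc (le_trans hcx' (hm1 ▸ hm))⟩
      · right; exact ⟨hxK, le_trans hc (le_trans hcx' (hm1 ▸ hm))⟩
    by_contra hboth
    push_neg at hboth
    obtain ⟨hnA, hnB⟩ := hboth
    obtain ⟨xa, hxaC, hxaA⟩ := Set.not_subset.mp hnA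
    obtain ⟨xb, hxbC, hxbB⟩ := Set.not_subset.mp hnB
    have hpre : IsPreconnected (Cset α c) := hconvC.isPreconnected
    have hcover : Cset α c ⊆ Bᶜ ∪ Aᶜ := by
      intro x hx
      rcases hsub hx with hxA | hxB
      · exact Or.inl (fun hxB => hAB x hxA hxB)
      · exact Or.inr (fun hxA => hAB x hxA hxB)
    obtain ⟨x, hxC, hxB, hxA⟩ := hpre Bᶜ Aᶜ hBcl.isOpen_compl hAcl.isOpen_compl hcover
      ⟨xb, hxbC, hxbB⟩ ⟨xa, hxaC, hxaA⟩
    rcases hsub hxC with h | h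
    · exact hxA h
    · exact hxB h
  -- the "side" predicate
  set P : ℝ → Prop := fun α => Cset α b ⊆ A with hP
  have hPmono : ∀ α ∈ Set.Icc α₁ α₂, ∀ c : ℝ, aL ≤ c → c ≤ b → (P α → Cset α c ⊆ A) := by
    intro α hα c hc1 hc2 hPα
    rcases hdich α hα c hc1 with hcA | hcB
    · exact hcA
    · exfalso
      obtain ⟨x, hx⟩ := hCne α hα
      have hxc : x ∈ Cset α c := ⟨hx.1, le_trans hc2 hx.2⟩
      exact hAB x (hPα hx) (hcB hxc)
  have hPα₁ : P α₁ := by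
    intro x hx
    exact ⟨hx.1, le_trans (show aL ≤ b by linarith) hx.2⟩
  have hPα₂ : ¬ P α₂ := by
    intro hPα₂
    obtain ⟨x, hx⟩ := hCne α₂ hmem2
    exact hAB x (hPα₂ hx) ⟨hx.1, le_trans (show aL ≤ b by linarith) hx.2⟩
  -- uniform continuity
  have hKcpt2 : IsCompact (Set.Icc α₁ α₂ ×ˢ K) := isCompact_Icc.prod hKc
  have hunif := hKcpt2.uniformContinuousOn_of_continuous hcont
  rw [Metric.uniformContinuousOn_iff] at hunif
  obtain ⟨δ, hδ0, hδ⟩ := hunif ((b - γ)/3) (by linarith)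
  -- transfer of the side along close parameters
  have htrans : ∀ αa ∈ Set.Icc α₁ α₂, ∀ αb ∈ Set.Icc α₁ α₂, |αa - αb| < δ → P αa → P αb := by
    intro αa ha αb hb hdist hPa
    intro x hxCb
    have hxK : x ∈ K := hxCb.1
    have hθb : b ≤ θ αb x := hxCb.2
    have hd : dist ((αa, x) : ℝ × E) ((αb, x) : ℝ × E) < δ := by
      rw [Prod.dist_eq, dist_self, Real.dist_eq]
      exact max_lt hdist hδ0
    have hclose := hδ (αa, x) ⟨ha, hxK⟩ (αb, x) ⟨hb, hxK⟩ hd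
    rw [Real.dist_eq] at hclose
    have habs := abs_lt.mp hclose
    have hθa : aM ≤ θ αa x := by rw [haM]; linarith [habs.1]
    exact hPmono αa ha aM haLaM.le haMb.le hPa ⟨hxK, hθa⟩
  -- propagate the side from α₁ to α₂
  have hstep : ∀ n : ℕ, ∀ t ∈ Set.Icc α₁ α₂, t ≤ α₁ + n * (δ/2) → P t := by
    intro n
    induction n with
    | zero =>
      intro t ht hle
      have : t = α₁ := le_antisymm (by simpa using hle) ht.1
      rwa [this]
    | succ n ih =>
      intro t ht hle
      rcases le_or_gt t (α₁ + n * (δ/2)) with hle' | hlt'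
      · exact ih t ht hle'
      · have ht' : α₁ + n * (δ/2) ∈ Set.Icc α₁ α₂ := by
          constructor
          · have : (0:ℝ) ≤ n * (δ/2) := by positivity
            linarith
          · linarith [ht.2]
        have hP' := ih _ ht' (le_refl _)
        refine htrans _ ht' t ht ?_ hP'
        rw [abs_lt]
        push_cast at hle ⊢
        constructor <;> linarith
  obtain ⟨n, hn⟩ := exists_nat_ge ((α₂ - α₁)/(δ/2))
  have h2δ : (0:ℝ) < δ/2 := by linarith
  have : α₂ ≤ α₁ + n * (δ/2) := by
    rw [div_le_iff₀ h2δ] at hn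
    linarith
  exact hPα₂ (hstep n α₂ hmem2 this)


theorem sion_finset (θ : ℝ → E → ℝ) (D : Set ℝ) (hDconv : Convex ℝ D) (hDne : D.Nonempty)
    (K₀ : Set E)
    (hconc : ∀ α ∈ D, ConcaveOn ℝ K₀ (θ α))
    (hqc : ∀ x ∈ K₀, ∀ α₁ ∈ D, ∀ α₂ ∈ D, ∀ a b : ℝ, 0 ≤ a → 0 ≤ b → a + b = 1 →
      θ (a*α₁+b*α₂) x ≤ max (θ α₁ x) (θ α₂ x))
    (hcont : ∀ α₁ ∈ D, ∀ α₂ ∈ D,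
      ContinuousOn (fun p : ℝ × E => θ p.1 p.2) (Set.Icc α₁ α₂ ×ˢ K₀))
    (s : Finset ℝ) :
    ∀ (K : Set E), IsCompact K → Convex ℝ K → K ⊆ K₀ →
    ∀ γ b : ℝ, γ < b → ↑s ⊆ D → (∀ α ∈ D, ∃ x ∈ K, b < θ α x) →
    ∃ x ∈ K, ∀ α ∈ s, γ < θ α x := by
  classical
  induction s using Finset.induction_on with
  | empty =>
    intro K hKc hKconv hKsub γ b hγb hsub H
    obtain ⟨α₀, hα₀⟩ := hDne
    obtain ⟨x, hx, _⟩ := H α₀ hα₀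
    exact ⟨x, hx, by simp⟩
  | @insert α₀ s hα₀s ih =>
    intro K hKc hKconv hKsub γ b hγb hsub H
    have hα₀D : α₀ ∈ D := hsub (by simp)
    have hsD : ↑s ⊆ D := fun x hx => hsub (by simp [hx])
    set b' := (γ + b)/2 with hb'
    have hγb' : γ < b' := by rw [hb']; linarith
    have hb'b : b' < b := by rw [hb']; linarith
    have hcxα₀ : ContinuousOn (θ α₀) K :=
      (hcont α₀ hα₀D α₀ hα₀D).comp ((continuous_const.prodMk continuous_id).continuousOn)
        (fun x hx => ⟨⟨le_refl _, le_refl _⟩, hKsub hx⟩)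
    set K' : Set E := K ∩ (θ α₀) ⁻¹' (Set.Ici b') with hK'
    have hK'cl : IsClosed K' := hcxα₀.preimage_isClosed_of_isClosed hKc.isClosed isClosed_Ici
    have hK'c : IsCompact K' := hKc.of_isClosed_subset hK'cl Set.inter_subset_left
    have hK'conv : Convex ℝ K' := by
      have h := ((hconc α₀ hα₀D).subset hKsub hKconv).convex_ge b'
      have he : {x ∈ K | b' ≤ θ α₀ x} = K' := by
        ext x; simp [hK', Set.mem_sep_iff]
      rwa [he] at h
    have hK'sub : K' ⊆ K₀ := fun x hx => hKsub hx.1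
    have hIccD : ∀ a ∈ D, ∀ c ∈ D, Set.Icc a c ⊆ D :=
      fun a ha c hc => hDconv.ordConnected.out ha hc
    have H' : ∀ α ∈ D, ∃ x ∈ K', b' < θ α x := by
      intro α hαD
      rcases le_total α₀ α with hle | hle
      · obtain ⟨x, hx, hx1, hx2⟩ := sion_pair θ D K hKc
          (fun β hβ => (hconc β hβ).subset hKsub hKconv)
          (fun x hx => hqc x (hKsub hx)) hIccD
          hα₀D hαD hle ((hcont α₀ hα₀D α hαD).mono (Set.prod_mono_right hKsub)) hb'b
          (fun β hβ => H β (hIccD α₀ hα₀D α hαD hβ))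
        exact ⟨x, ⟨hx, le_of_lt hx1⟩, hx2⟩
      · obtain ⟨x, hx, hx1, hx2⟩ := sion_pair θ D K hKc
          (fun β hβ => (hconc β hβ).subset hKsub hKconv)
          (fun x hx => hqc x (hKsub hx)) hIccD
          hαD hα₀D hle ((hcont α hαD α₀ hα₀D).mono (Set.prod_mono_right hKsub)) hb'b
          (fun β hβ => H β (hIccD α hαD α₀ hα₀D hβ))
        exact ⟨x, ⟨hx, le_of_lt hx2⟩, hx1⟩
    obtain ⟨x, hxK', hxs⟩ := ih K' hK'c hK'conv hK'sub γ b' hγb' hsD H'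
    refine ⟨x, hxK'.1, ?_⟩
    intro α hα
    rcases Finset.mem_insert.mp hα with rfl | hαs
    · exact lt_of_lt_of_le hγb' hxK'.2
    · exact hxs α hαs

theorem sion_inf (θ : ℝ → E → ℝ) (D : Set ℝ) (hDconv : Convex ℝ D) (hDne : D.Nonempty)
    (K : Set E) (hKc : IsCompact K) (hKconv : Convex ℝ K)
    (hconc : ∀ α ∈ D, ConcaveOn ℝ K (θ α))
    (hqc : ∀ x ∈ K, ∀ α₁ ∈ D, ∀ α₂ ∈ D, ∀ a b : ℝ, 0 ≤ a → 0 ≤ b → a + b = 1 →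
      θ (a*α₁+b*α₂) x ≤ max (θ α₁ x) (θ α₂ x))
    (hcont : ∀ α₁ ∈ D, ∀ α₂ ∈ D,
      ContinuousOn (fun p : ℝ × E => θ p.1 p.2) (Set.Icc α₁ α₂ ×ˢ K))
    (γ b : ℝ) (hγb : γ < b) (H : ∀ α ∈ D, ∃ x ∈ K, b < θ α x) :
    ∃ x ∈ K, ∀ α ∈ D, γ ≤ θ α x := by
  classical
  have hcx : ∀ α ∈ D, ContinuousOn (θ α) K := fun α hα =>
    (hcont α hα α hα).comp ((continuous_const.prodMk continuous_id).continuousOn)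
      (fun x hx => ⟨⟨le_refl _, le_refl _⟩, hx⟩)
  set t : D → Set E := fun i => K ∩ (θ i) ⁻¹' (Set.Ici γ) with ht
  have htc : ∀ i : D, IsClosed (t i) := fun i =>
    (hcx i i.2).preimage_isClosed_of_isClosed hKc.isClosed isClosed_Ici
  have hfin : ∀ u : Finset D, (K ∩ ⋂ i ∈ u, t i).Nonempty := by
    intro u
    set s : Finset ℝ := u.image Subtype.val with hs
    have hsD : ↑s ⊆ D := by
      intro x hx
      simp only [hs, Finset.coe_image, Set.mem_image, Finset.mem_coe] at hx
      obtain ⟨i, _, rfl⟩ := hx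
      exact i.2
    obtain ⟨x, hxK, hxs⟩ := sion_finset θ D hDconv hDne K hconc hqc hcont s K hKc hKconv
      (subset_refl K) γ b hγb hsD H
    refine ⟨x, hxK, ?_⟩
    simp only [Set.mem_iInter]
    intro i hi
    exact ⟨hxK, le_of_lt (hxs i.val (by rw [hs]; exact Finset.mem_image_of_mem _ hi))⟩
  obtain ⟨x, hxK, hxI⟩ := hKc.inter_iInter_nonempty t htc hfin
  refine ⟨x, hxK, ?_⟩
  intro α hα
  exact (Set.mem_iInter.mp hxI ⟨α, hα⟩).2

end Sion

/-- under `Φ(0;μ) ≥ 0` on `M`, the quantity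
`Ψ̂₊(f) = inf{Ψ₊(f,α) + α ln(2/ε) : α>0, f/α ∈ F}` is finite (the defining set is
nonempty and bounded below), it equals
`max_{x∈𝒳} inf{α·Φ(f/α;A(x)) − G(x) + α ln(2/ε) : α>0, f/α∈F}`, and `f ↦ Ψ̂₊(f)`
is convex on ℝ^{n_F}. -/
theorem statement12 {nF nM nX : ℕ}
    (F : Set (Fin nF → ℝ)) (hFcl : IsClosed F) (hFconv : Convex ℝ F)
    (hFsymm : ∀ f ∈ F, -f ∈ F) (hF0 : 0 ∈ interior F)
    (M : Set (Fin nM → ℝ)) (hMcl : IsClosed M) (hMconv : Convex ℝ M)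
    (Φ : (Fin nF → ℝ) → (Fin nM → ℝ) → ℝ)
    (hΦcont : ContinuousOn (fun p : (Fin nF → ℝ) × (Fin nM → ℝ) => Φ p.1 p.2) (F ×ˢ M))
    (hΦconv : ∀ μ ∈ M, ConvexOn ℝ F (fun f => Φ f μ))
    (hΦconc : ∀ f ∈ F, ConcaveOn ℝ M (fun μ => Φ f μ))
    (hΦ0 : ∀ μ ∈ M, 0 ≤ Φ 0 μ)
    (𝒳 : Set (Fin nX → ℝ)) (h𝒳ne : 𝒳.Nonempty) (h𝒳conv : Convex ℝ 𝒳)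
    (h𝒳cpt : IsCompact 𝒳)
    (X : Set (Fin nX → ℝ)) (hXne : X.Nonempty) (hX𝒳 : X ⊆ 𝒳)
    (A : (Fin nX → ℝ) →ᵃ[ℝ] (Fin nM → ℝ)) (hA : ∀ x ∈ 𝒳, A x ∈ M)
    (g : Fin nX → ℝ) (c : ℝ) (ε : ℝ) (hε0 : 0 < ε) (hε1 : ε < 1) :
    (∀ f : Fin nF → ℝ,
      {t : ℝ | ∃ α : ℝ, 0 < α ∧ α⁻¹ • f ∈ F ∧
          t = PsiPlus Φ A g c 𝒳 f α + α * Real.log (2/ε)}.Nonempty ∧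
      BddBelow {t : ℝ | ∃ α : ℝ, 0 < α ∧ α⁻¹ • f ∈ F ∧
          t = PsiPlus Φ A g c 𝒳 f α + α * Real.log (2/ε)} ∧
      sInf {t : ℝ | ∃ α : ℝ, 0 < α ∧ α⁻¹ • f ∈ F ∧
          t = PsiPlus Φ A g c 𝒳 f α + α * Real.log (2/ε)}
        = sSup ((fun x => sInf {t : ℝ | ∃ α : ℝ, 0 < α ∧ α⁻¹ • f ∈ F ∧
            t = α * Φ (α⁻¹ • f) (A x) - (g ⬝ᵥ x + c) + α * Real.log (2/ε)}) '' 𝒳)) ∧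
    ConvexOn ℝ Set.univ (fun f : Fin nF → ℝ =>
      sInf {t : ℝ | ∃ α : ℝ, 0 < α ∧ α⁻¹ • f ∈ F ∧
          t = PsiPlus Φ A g c 𝒳 f α + α * Real.log (2/ε)}) := by
  classical
  set L := Real.log (2/ε) with hLdef
  have hL : 0 ≤ L := Real.log_nonneg (by rw [le_div_iff₀ hε0]; linarith)
  have h0F : (0 : Fin nF → ℝ) ∈ F := interior_subset hF0
  obtain ⟨x₀, hx₀⟩ := h𝒳ne
  have h𝒳ne' : 𝒳.Nonempty := ⟨x₀, hx₀⟩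
  have hGc : Continuous (fun x : Fin nX → ℝ => g ⬝ᵥ x + c) := by
    have h1 : Continuous fun x : Fin nX → ℝ => ∑ i, g i * x i :=
      continuous_finset_sum _ (fun i _ => continuous_const.mul (continuous_apply i))
    show Continuous fun x : Fin nX → ℝ => ∑ i, g i * x i + c; exact h1.add continuous_const
  have hAc : Continuous (A : (Fin nX → ℝ) → (Fin nM → ℝ)) :=
    A.continuous_of_finiteDimensional
  have hdot : ∀ (a b : ℝ) (x y : Fin nX → ℝ),
      g ⬝ᵥ (a • x + b • y) = a * (g ⬝ᵥ x) + b * (g ⬝ᵥ y) := by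
    intro a b x y
    simp [dotProduct, Finset.sum_add_distrib, Finset.mul_sum, mul_add,
      mul_comm, mul_left_comm]
  -- feasibility
  have hDne : ∀ f : Fin nF → ℝ, ∃ α : ℝ, 0 < α ∧ α⁻¹ • f ∈ F := by
    intro f
    obtain ⟨r, hr0, hball⟩ := Metric.mem_nhds_iff.mp (mem_interior_iff_mem_nhds.mp hF0)
    have hα : (0:ℝ) < ‖f‖/r + 1 := by positivity
    refine ⟨‖f‖/r + 1, hα, hball ?_⟩
    rw [mem_ball_zero_iff, norm_smul, norm_inv, Real.norm_eq_abs, abs_of_pos hα,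
      inv_mul_lt_iff₀ hα]
    have he : (‖f‖/r + 1) * r = ‖f‖ + r := by field_simp
    rw [he]; linarith
  -- weighted average ≤ max
  have hwavg : ∀ u v a b : ℝ, 0 ≤ a → 0 ≤ b → a + b = 1 → a*u + b*v ≤ max u v := by
    intro u v a b ha hb hab
    rcases le_total u v with h | h
    · calc a*u+b*v ≤ a*v+b*v := add_le_add_left (mul_le_mul_of_nonneg_left h ha) _
        _ = v := by rw [← add_mul, hab, one_mul]
        _ ≤ max u v := le_max_right _ _
    · calc a*u+b*v ≤ a*u+b*u := add_le_add_right (mul_le_mul_of_nonneg_left h hb) _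
        _ = u := by rw [← add_mul, hab, one_mul]
        _ ≤ max u v := le_max_left _ _
  -- convexity of the feasibility domain
  have hDconv : ∀ f : Fin nF → ℝ, Convex ℝ {α : ℝ | 0 < α ∧ α⁻¹ • f ∈ F} := by
    intro f α₁ h1 α₂ h2 a b ha hb hab
    have hpos : 0 < a*α₁+b*α₂ := by
      rcases ha.lt_or_eq with h | h
      · exact add_pos_of_pos_of_nonneg (mul_pos h h1.1) (mul_nonneg hb h2.1.le)
      · have hb1 : b = 1 := by linarith
        rw [← h, hb1]; simpa using h2.1
    have hmem := (persp_key hFconv (hΦconv (A x₀) (hA x₀ hx₀)) ha hb hab h1.1 h2.1 h1.2 h2.2).1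
    have hf : a • f + b • f = f := by rw [← add_smul, hab, one_smul]
    rw [hf] at hmem
    exact ⟨hpos, hmem⟩
  -- joint continuity
  have hjoint : ∀ (f : Fin nF → ℝ) (α₁ α₂ : ℝ), 0 < α₁ →
      (∀ β ∈ Set.Icc α₁ α₂, β⁻¹ • f ∈ F) →
      ContinuousOn (fun p : ℝ × (Fin nX → ℝ) =>
        p.1 * Φ (p.1⁻¹ • f) (A p.2) - (g ⬝ᵥ p.2 + c) + p.1 * L)
        (Set.Icc α₁ α₂ ×ˢ 𝒳) := by
    intro f α₁ α₂ hα₁ hmem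
    have h1 : ContinuousOn (fun p : ℝ × (Fin nX → ℝ) => Φ (p.1⁻¹ • f) (A p.2))
        (Set.Icc α₁ α₂ ×ˢ 𝒳) := by
      have hpair : ContinuousOn (fun p : ℝ × (Fin nX → ℝ) => (p.1⁻¹ • f, A p.2))
          (Set.Icc α₁ α₂ ×ˢ 𝒳) :=
        ContinuousOn.prodMk
          (ContinuousOn.smul
            (ContinuousOn.inv₀ continuous_fst.continuousOn
              (fun p hp => (lt_of_lt_of_le hα₁ hp.1.1).ne'))
            continuousOn_const)
          ((hAc.comp continuous_snd).continuousOn)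
      exact ContinuousOn.comp hΦcont hpair (fun p hp => ⟨hmem p.1 hp.1, hA p.2 hp.2⟩)
    exact ((continuous_fst.continuousOn.mul h1).sub
      ((hGc.comp continuous_snd).continuousOn)).add
      (continuous_fst.continuousOn.mul continuousOn_const)
  -- continuity in x
  have hcontx : ∀ (f : Fin nF → ℝ) (α : ℝ), 0 < α → α⁻¹ • f ∈ F →
      ContinuousOn (fun x => α * Φ (α⁻¹ • f) (A x) - (g ⬝ᵥ x + c)) 𝒳 := by
    intro f α hα hm
    have h1 : ContinuousOn (fun x => Φ (α⁻¹ • f) (A x)) 𝒳 := by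
      exact ContinuousOn.comp
        (g := fun p : (Fin nF → ℝ) × (Fin nM → ℝ) => Φ p.1 p.2)
        (f := fun x : Fin nX → ℝ => ((α⁻¹ • f : Fin nF → ℝ), A x)) hΦcont
        (ContinuousOn.prodMk continuousOn_const hAc.continuousOn)
        (fun x hx => ⟨hm, hA x hx⟩)
    exact (continuousOn_const.mul h1).sub hGc.continuousOn
  -- concavity in x
  have hconcθ : ∀ (f : Fin nF → ℝ) (α : ℝ), 0 < α → α⁻¹ • f ∈ F →
      ConcaveOn ℝ 𝒳 (fun x => α * Φ (α⁻¹ • f) (A x) - (g ⬝ᵥ x + c) + α * L) := by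
    intro f α hα hm
    have h1 : ConcaveOn ℝ 𝒳 (fun x => Φ (α⁻¹ • f) (A x)) :=
      ((hΦconc _ hm).comp_affineMap A).subset (fun x hx => hA x hx) h𝒳conv
    have h2 : ConcaveOn ℝ 𝒳 (fun x => α * Φ (α⁻¹ • f) (A x)) := by
      have := h1.smul hα.le
      simpa [smul_eq_mul] using this
    have h3 : ConcaveOn ℝ 𝒳 (fun x => -(g ⬝ᵥ x + c) + α * L) := by
      refine ⟨h𝒳conv, ?_⟩
      intro x _ y _ a b ha hb hab
      simp only [smul_eq_mul]
      have hd := hdot a b x y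
      have hb1 : b = 1 - a := by linarith
      subst hb1
      rw [hd]
      exact le_of_eq (by ring)
    have heq : (fun x => α * Φ (α⁻¹ • f) (A x) - (g ⬝ᵥ x + c) + α * L)
        = fun x => (α * Φ (α⁻¹ • f) (A x)) + (-(g ⬝ᵥ x + c) + α * L) := by
      funext x; ring
    rw [heq]; exact h2.add h3  -- quasiconvexity in α
  have hqcθ : ∀ (f : Fin nF → ℝ), ∀ x ∈ 𝒳, ∀ α₁, (0 < α₁ ∧ α₁⁻¹ • f ∈ F) → ∀ α₂,
      (0 < α₂ ∧ α₂⁻¹ • f ∈ F) → ∀ a b : ℝ, 0 ≤ a → 0 ≤ b → a + b = 1 →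
      (a*α₁+b*α₂) * Φ ((a*α₁+b*α₂)⁻¹ • f) (A x) - (g ⬝ᵥ x + c) + (a*α₁+b*α₂) * L
        ≤ max (α₁ * Φ (α₁⁻¹ • f) (A x) - (g ⬝ᵥ x + c) + α₁ * L)
              (α₂ * Φ (α₂⁻¹ • f) (A x) - (g ⬝ᵥ x + c) + α₂ * L) := by
    intro f x hx α₁ h1 α₂ h2 a b ha hb hab
    have hkey := (persp_key hFconv (hΦconv (A x) (hA x hx)) ha hb hab h1.1 h2.1 h1.2 h2.2).2
    have hf : a • f + b • f = f := by rw [← add_smul, hab, one_smul]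
    rw [hf] at hkey
    have hexp : a * (α₁ * Φ (α₁⁻¹ • f) (A x) - (g ⬝ᵥ x + c) + α₁ * L)
          + b * (α₂ * Φ (α₂⁻¹ • f) (A x) - (g ⬝ᵥ x + c) + α₂ * L)
        = (a*α₁ * Φ (α₁⁻¹ • f) (A x) + b*α₂ * Φ (α₂⁻¹ • f) (A x))
          - (a+b) * (g ⬝ᵥ x + c) + (a*α₁+b*α₂) * L := by ring
    have hstep : (a*α₁+b*α₂) * Φ ((a*α₁+b*α₂)⁻¹ • f) (A x) - (g ⬝ᵥ x + c) + (a*α₁+b*α₂) * L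
        ≤ a * (α₁ * Φ (α₁⁻¹ • f) (A x) - (g ⬝ᵥ x + c) + α₁ * L)
          + b * (α₂ * Φ (α₂⁻¹ • f) (A x) - (g ⬝ᵥ x + c) + α₂ * L) := by
      rw [hexp, hab, one_mul]; linarith
    exact le_trans hstep (hwavg _ _ a b ha hb hab)
  -- sup bounds for PsiPlus
  have himgne : ∀ (f : Fin nF → ℝ) (α : ℝ),
      ((fun x => α * Φ (α⁻¹ • f) (A x) - (g ⬝ᵥ x + c)) '' 𝒳).Nonempty :=
    fun f α => h𝒳ne'.image _
  have hbddΨ : ∀ (f : Fin nF → ℝ) (α : ℝ), 0 < α → α⁻¹ • f ∈ F →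
      BddAbove ((fun x => α * Φ (α⁻¹ • f) (A x) - (g ⬝ᵥ x + c)) '' 𝒳) :=
    fun f α hα hm => h𝒳cpt.bddAbove_image (hcontx f α hα hm)
  have hlePsi : ∀ (f : Fin nF → ℝ) (α : ℝ), 0 < α → α⁻¹ • f ∈ F → ∀ x ∈ 𝒳,
      α * Φ (α⁻¹ • f) (A x) - (g ⬝ᵥ x + c) ≤ PsiPlus Φ A g c 𝒳 f α := by
    intro f α hα hm x hx
    exact le_csSup (hbddΨ f α hα hm) (Set.mem_image_of_mem _ hx)
  -- lower bound on θ values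
  have hθlb : ∀ (f : Fin nF → ℝ) (α₀ : ℝ), 0 < α₀ → α₀⁻¹ • f ∈ F →
      ∀ (α : ℝ), 0 < α → α⁻¹ • f ∈ F → ∀ x ∈ 𝒳,
      min (-(α₀ * Φ (-(α₀⁻¹ • f)) (A x))) (α₀ * Φ (α₀⁻¹ • f) (A x) - α₀ * Φ 0 (A x))
        - (g ⬝ᵥ x + c)
        ≤ α * Φ (α⁻¹ • f) (A x) - (g ⬝ᵥ x + c) + α * L := by
    intro f α₀ hα₀ hm₀ α hα hm x hx
    have h1 := persp_lb hFsymm h0F (hΦconv (A x) (hA x hx)) (hΦ0 (A x) (hA x hx))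
      hα₀ hm₀ hα hm
    have h2 : 0 ≤ α * L := mul_nonneg hα.le hL
    linarith
  -- nonemptiness of the outer set
  have hSne : ∀ f : Fin nF → ℝ,
      {t : ℝ | ∃ α : ℝ, 0 < α ∧ α⁻¹ • f ∈ F ∧
        t = PsiPlus Φ A g c 𝒳 f α + α * L}.Nonempty := by
    intro f
    obtain ⟨α₀, hα₀, hm₀⟩ := hDne f
    exact ⟨_, α₀, hα₀, hm₀, rfl⟩
  -- bddBelow of the outer set
  have hSbdd : ∀ f : Fin nF → ℝ,
      BddBelow {t : ℝ | ∃ α : ℝ, 0 < α ∧ α⁻¹ • f ∈ F ∧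
        t = PsiPlus Φ A g c 𝒳 f α + α * L} := by
    intro f
    obtain ⟨α₀, hα₀, hm₀⟩ := hDne f
    refine ⟨min (-(α₀ * Φ (-(α₀⁻¹ • f)) (A x₀))) (α₀ * Φ (α₀⁻¹ • f) (A x₀) - α₀ * Φ 0 (A x₀))
      - (g ⬝ᵥ x₀ + c), ?_⟩
    rintro t ⟨α, hα, hm, rfl⟩
    have h1 := hθlb f α₀ hα₀ hm₀ α hα hm x₀ hx₀
    have h2 := hlePsi f α hα hm x₀ hx₀
    linarith
  -- the minimax equality
  have hEq : ∀ f : Fin nF → ℝ,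
      sInf {t : ℝ | ∃ α, 0 < α ∧ α⁻¹ • f ∈ F ∧ t = PsiPlus Φ A g c 𝒳 f α + α * L}
        = sSup ((fun x => sInf {t : ℝ | ∃ α, 0 < α ∧ α⁻¹ • f ∈ F ∧
            t = α * Φ (α⁻¹ • f) (A x) - (g ⬝ᵥ x + c) + α * L}) '' 𝒳) := by
    intro f
    obtain ⟨α₀, hα₀, hm₀⟩ := hDne f
    set S : Set ℝ := {t : ℝ | ∃ α, 0 < α ∧ α⁻¹ • f ∈ F ∧
      t = PsiPlus Φ A g c 𝒳 f α + α * L} with hSdef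
    set T : (Fin nX → ℝ) → Set ℝ := fun x => {t : ℝ | ∃ α, 0 < α ∧ α⁻¹ • f ∈ F ∧
      t = α * Φ (α⁻¹ • f) (A x) - (g ⬝ᵥ x + c) + α * L} with hTdef
    have hTne : ∀ x, (T x).Nonempty := fun x => ⟨_, α₀, hα₀, hm₀, rfl⟩
    have hTbdd : ∀ x ∈ 𝒳, BddBelow (T x) := by
      intro x hx
      refine ⟨min (-(α₀ * Φ (-(α₀⁻¹ • f)) (A x))) (α₀ * Φ (α₀⁻¹ • f) (A x) - α₀ * Φ 0 (A x))
        - (g ⬝ᵥ x + c), ?_⟩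
      rintro t ⟨α, hα, hm, rfl⟩
      exact hθlb f α₀ hα₀ hm₀ α hα hm x hx
    have hTleθ : ∀ x ∈ 𝒳, ∀ α : ℝ, 0 < α → α⁻¹ • f ∈ F →
        sInf (T x) ≤ α * Φ (α⁻¹ • f) (A x) - (g ⬝ᵥ x + c) + α * L := by
      intro x hx α hα hm
      exact csInf_le (hTbdd x hx) ⟨α, hα, hm, rfl⟩
    have hbdd0 : BddAbove ((fun x => α₀ * Φ (α₀⁻¹ • f) (A x) - (g ⬝ᵥ x + c) + α₀ * L) '' 𝒳) :=
      h𝒳cpt.bddAbove_image ((hcontx f α₀ hα₀ hm₀).add continuousOn_const)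
    obtain ⟨C₀, hC₀⟩ := hbdd0
    have hInner : BddAbove ((fun x => sInf (T x)) '' 𝒳) := by
      refine ⟨C₀, ?_⟩
      rintro y ⟨x, hx, rfl⟩
      exact le_trans (hTleθ x hx α₀ hα₀ hm₀) (hC₀ (Set.mem_image_of_mem _ hx))
    have hInnerNe : ((fun x => sInf (T x)) '' 𝒳).Nonempty := h𝒳ne'.image _
    apply le_antisymm
    · -- hard direction via sion_inf
      by_contra hcon
      push_neg at hcon
      set R := sSup ((fun x => sInf (T x)) '' 𝒳) with hRdef
      set γ := (R + sInf S)/2 with hγdef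
      set b := (γ + sInf S)/2 with hbdef
      have hRS : R < sInf S := hcon
      have hRγ : R < γ := by rw [hγdef]; linarith
      have hγb : γ < b := by rw [hbdef, hγdef]; linarith
      have hbS : b < sInf S := by rw [hbdef]; linarith
      have H : ∀ α ∈ {α : ℝ | 0 < α ∧ α⁻¹ • f ∈ F}, ∃ x ∈ 𝒳,
          b < α * Φ (α⁻¹ • f) (A x) - (g ⬝ᵥ x + c) + α * L := by
        intro α hα
        have h1 : sInf S ≤ PsiPlus Φ A g c 𝒳 f α + α * L :=
          csInf_le (hSbdd f) ⟨α, hα.1, hα.2, rfl⟩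
        have h2 : b - α * L < sSup ((fun x => α * Φ (α⁻¹ • f) (A x) - (g ⬝ᵥ x + c)) '' 𝒳) := by
          show b - α * L < PsiPlus Φ A g c 𝒳 f α
          linarith
        obtain ⟨y, ⟨x, hx, rfl⟩, hy⟩ := exists_lt_of_lt_csSup (himgne f α) h2
        exact ⟨x, hx, by linarith⟩
      obtain ⟨xs, hxs, hall⟩ := sion_inf
        (fun α x => α * Φ (α⁻¹ • f) (A x) - (g ⬝ᵥ x + c) + α * L)
        {α : ℝ | 0 < α ∧ α⁻¹ • f ∈ F} (hDconv f) ⟨α₀, hα₀, hm₀⟩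
        𝒳 h𝒳cpt h𝒳conv
        (fun α hα => hconcθ f α hα.1 hα.2)
        (fun x hx α₁ h1 α₂ h2 a bb ha hb hab => hqcθ f x hx α₁ h1 α₂ h2 a bb ha hb hab)
        (fun α₁ h1 α₂ h2 => hjoint f α₁ α₂ h1.1
          (fun β hβ => (((hDconv f).ordConnected.out h1 h2) hβ).2))
        γ b hγb H
      have hγT : γ ≤ sInf (T xs) := by
        apply le_csInf (hTne xs)
        rintro t ⟨α, hα, hm, rfl⟩
        exact hall α ⟨hα, hm⟩
      have hcontr : γ ≤ R := le_trans hγT (le_csSup hInner (Set.mem_image_of_mem _ hxs))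
      linarith
    · -- easy direction
      apply csSup_le hInnerNe
      rintro y ⟨x, hx, rfl⟩
      apply le_csInf (hSne f)
      rintro t ⟨α, hα, hm, rfl⟩
      have h1 := hTleθ x hx α hα hm
      have h2 := hlePsi f α hα hm x hx
      linarith
  refine ⟨fun f => ⟨hSne f, hSbdd f, hEq f⟩, convex_univ, ?_⟩
  -- convexity
  intro f₁ _ f₂ _ a b ha hb hab
  simp only [smul_eq_mul]
  rcases ha.lt_or_eq with ha0 | ha0
  swap
  · have hb1 : b = 1 := by linarith
    rw [← ha0, hb1]
    simp
  rcases hb.lt_or_eq with hb0 | hb0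
  swap
  · have ha1 : a = 1 := by linarith
    rw [← hb0, ha1]
    simp
  apply le_of_forall_pos_le_add
  intro δ hδ
  obtain ⟨t₁, ht₁S, ht₁⟩ := exists_lt_of_csInf_lt (hSne f₁)
    (lt_add_of_pos_right _ (by linarith : (0:ℝ) < δ/2))
  obtain ⟨α₁, hα₁, hm₁, ht₁e⟩ := ht₁S
  obtain ⟨t₂, ht₂S, ht₂⟩ := exists_lt_of_csInf_lt (hSne f₂)
    (lt_add_of_pos_right _ (by linarith : (0:ℝ) < δ/2))
  obtain ⟨α₂, hα₂, hm₂, ht₂e⟩ := ht₂S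
  subst ht₁e ht₂e
  have hcomb := (persp_key hFconv (hΦconv (A x₀) (hA x₀ hx₀)) ha hb hab hα₁ hα₂ hm₁ hm₂).1
  have hαc : 0 < a*α₁+b*α₂ := add_pos (mul_pos ha0 hα₁) (mul_pos hb0 hα₂)
  have hPsiC : PsiPlus Φ A g c 𝒳 (a • f₁ + b • f₂) (a*α₁+b*α₂)
      ≤ a * PsiPlus Φ A g c 𝒳 f₁ α₁ + b * PsiPlus Φ A g c 𝒳 f₂ α₂ := by
    apply csSup_le (himgne _ _)
    rintro t ⟨x, hx, rfl⟩
    have hkey := (persp_key hFconv (hΦconv (A x) (hA x hx)) ha hb hab hα₁ hα₂ hm₁ hm₂).2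
    have h1 := hlePsi f₁ α₁ hα₁ hm₁ x hx
    have h2 := hlePsi f₂ α₂ hα₂ hm₂ x hx
    have e1 : a * (α₁ * Φ (α₁⁻¹ • f₁) (A x) - (g ⬝ᵥ x + c))
        + b * (α₂ * Φ (α₂⁻¹ • f₂) (A x) - (g ⬝ᵥ x + c))
        = (a*α₁ * Φ (α₁⁻¹ • f₁) (A x) + b*α₂ * Φ (α₂⁻¹ • f₂) (A x))
          - (a+b)*(g ⬝ᵥ x + c) := by ring
    have h3 : (a*α₁+b*α₂) * Φ ((a*α₁+b*α₂)⁻¹ • (a • f₁ + b • f₂)) (A x) - (g ⬝ᵥ x + c)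
        ≤ a * (α₁ * Φ (α₁⁻¹ • f₁) (A x) - (g ⬝ᵥ x + c))
          + b * (α₂ * Φ (α₂⁻¹ • f₂) (A x) - (g ⬝ᵥ x + c)) := by
      rw [e1, hab, one_mul]; linarith
    calc (a*α₁+b*α₂) * Φ ((a*α₁+b*α₂)⁻¹ • (a • f₁ + b • f₂)) (A x) - (g ⬝ᵥ x + c)
        ≤ _ := h3
      _ ≤ a * PsiPlus Φ A g c 𝒳 f₁ α₁ + b * PsiPlus Φ A g c 𝒳 f₂ α₂ :=
          add_le_add (mul_le_mul_of_nonneg_left h1 ha) (mul_le_mul_of_nonneg_left h2 hb)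
  have hfin : sInf {t : ℝ | ∃ α, 0 < α ∧ α⁻¹ • (a • f₁ + b • f₂) ∈ F ∧
      t = PsiPlus Φ A g c 𝒳 (a • f₁ + b • f₂) α + α * L}
      ≤ PsiPlus Φ A g c 𝒳 (a • f₁ + b • f₂) (a*α₁+b*α₂) + (a*α₁+b*α₂) * L :=
    csInf_le (hSbdd _) ⟨a*α₁+b*α₂, hαc, hcomb, rfl⟩
  have hLsplit : (a*α₁+b*α₂) * L = a * (α₁ * L) + b * (α₂ * L) := by ring
  have hmul1 : a * (PsiPlus Φ A g c 𝒳 f₁ α₁ + α₁ * L)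
      < a * (sInf {t : ℝ | ∃ α, 0 < α ∧ α⁻¹ • f₁ ∈ F ∧
          t = PsiPlus Φ A g c 𝒳 f₁ α + α * L} + δ/2) :=
    mul_lt_mul_of_pos_left ht₁ ha0
  have hmul2 : b * (PsiPlus Φ A g c 𝒳 f₂ α₂ + α₂ * L)
      < b * (sInf {t : ℝ | ∃ α, 0 < α ∧ α⁻¹ • f₂ ∈ F ∧
          t = PsiPlus Φ A g c 𝒳 f₂ α + α * L} + δ/2) :=
    mul_lt_mul_of_pos_left ht₂ hb0
  have ea1 : a * (PsiPlus Φ A g c 𝒳 f₁ α₁ + α₁ * L)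
      = a * PsiPlus Φ A g c 𝒳 f₁ α₁ + a * (α₁ * L) := by ring
  have ea2 : a * (sInf {t : ℝ | ∃ α, 0 < α ∧ α⁻¹ • f₁ ∈ F ∧
        t = PsiPlus Φ A g c 𝒳 f₁ α + α * L} + δ/2)
      = a * sInf {t : ℝ | ∃ α, 0 < α ∧ α⁻¹ • f₁ ∈ F ∧
        t = PsiPlus Φ A g c 𝒳 f₁ α + α * L} + a * (δ/2) := by ring
  have eb1 : b * (PsiPlus Φ A g c 𝒳 f₂ α₂ + α₂ * L)
      = b * PsiPlus Φ A g c 𝒳 f₂ α₂ + b * (α₂ * L) := by ring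
  have eb2 : b * (sInf {t : ℝ | ∃ α, 0 < α ∧ α⁻¹ • f₂ ∈ F ∧
        t = PsiPlus Φ A g c 𝒳 f₂ α + α * L} + δ/2)
      = b * sInf {t : ℝ | ∃ α, 0 < α ∧ α⁻¹ • f₂ ∈ F ∧
        t = PsiPlus Φ A g c 𝒳 f₂ α + α * L} + b * (δ/2) := by ring
  have e4 : a * (δ/2) + b * (δ/2) = δ/2 := by rw [← add_mul, hab]; ring
  linarith

end
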